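/- Let E and F be real Hilbert spaces and let G : E × F → ℝ be twice continuously differentiable. Assume that for every (R,H) and every v ∈ F, ⟨∇²_H G(R,H) v, v⟩ ≥ α‖v‖² with α > 0, and that the mixed second derivative ∇_R∇_H G(R,H) has operator norm at most L₂. Suppose H* : E → F is differentiable and satisfies ∇_H G(R, H*(R)) = 0 for all R ∈ E. Then for every R ∈ E, the Fréchet derivative of H* satisfies ‖DH*(R)‖ ≤ L₂/α. -/

import Mathlib

open scoped RealInnerProductSpace

variable {E F : Type*} [NormedAddCommGroup E] [InnerProductSpace ℝ E] [CompleteSpace E]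
  [NormedAddCommGroup F] [InnerProductSpace ℝ F] [CompleteSpace F]

/-- Partial gradient of `G : E → F → ℝ` in the second variable, `∇_H G(R, H)`. -/
noncomputable def gradH (G : E → F → ℝ) (R : E) (H : F) : F :=
  gradient (fun H' => G R H') H

/-- Hessian of `G : E → F → ℝ` in the second variable, `∇²_H G(R, H) : F →L[ℝ] F`. -/
noncomputable def hessH (G : E → F → ℝ) (R : E) (H : F) : F →L[ℝ] F :=
  fderiv ℝ (fun H' => gradH G R H') H

/-- Mixed second derivative `∇_R ∇_H G(R, H) : E →L[ℝ] F`. -/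
noncomputable def mixedRH (G : E → F → ℝ) (R : E) (H : F) : E →L[ℝ] F :=
  fderiv ℝ (fun R' => gradH G R' H) R

/-- inequality (10) in the proof of Proposition 1. If the Hessian in `H` of
`G` is `α`-positive definite and the mixed second derivative has operator norm at most `L₂`,
then the implicit solution map `H*` (with `∇_H G(R, H*(R)) = 0`) satisfies
`‖DH*(R)‖ ≤ L₂/α`. -/
theorem stmt3 (α L₂ : ℝ) (hα : 0 < α)
    (G : E → F → ℝ)
    (hGsmooth : ContDiff ℝ 2 (fun p : E × F => G p.1 p.2))
    (hhess_pos : ∀ (R : E) (H : F) (v : F), α * ‖v‖ ^ 2 ≤ ⟪hessH G R H v, v⟫)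
    (hmixed_bound : ∀ (R : E) (H : F), ‖mixedRH G R H‖ ≤ L₂)
    (Hstar : E → F) (hHstar : Differentiable ℝ Hstar)
    (hstat : ∀ R : E, gradH G R (Hstar R) = 0) :
    ∀ R : E, ‖fderiv ℝ Hstar R‖ ≤ L₂ / α := by
  intro R
  set φ : E × F → ℝ := fun p => G p.1 p.2 with hφdef
  have hφ1 : Differentiable ℝ φ := hGsmooth.differentiable (by norm_num)
  have hf' : ContDiff ℝ 1 (fderiv ℝ φ) := hGsmooth.fderiv_right (by norm_num)
  set g : E × F → F := fun p =>
    (InnerProductSpace.toDual ℝ F).symm ((fderiv ℝ φ p).comp (ContinuousLinearMap.inr ℝ E F))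
    with hgdef
  -- g is differentiable
  have hg : Differentiable ℝ g := by
    apply (InnerProductSpace.toDual ℝ F).symm.differentiable.comp
    exact (hf'.differentiable (by norm_num)).clm_comp (differentiable_const _)
  -- gradH equals g
  have hA : ∀ (R' : E) (H : F), gradH G R' H = g (R', H) := by
    intro R' H
    have hpart : HasFDerivAt (fun H' => φ (R', H'))
        ((fderiv ℝ φ (R', H)).comp (ContinuousLinearMap.inr ℝ E F)) H :=
      (hφ1 (R', H)).hasFDerivAt.comp H (hasFDerivAt_prodMk_right R' H)
    show gradient (fun H' => G R' H') H = _
    rw [gradient, hpart.fderiv]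
  -- derivative of the composite is zero
  set p : E × F := (R, Hstar R) with hpdef
  have hcomp : HasFDerivAt (fun R' => g (R', Hstar R'))
      ((fderiv ℝ g p).comp
        ((ContinuousLinearMap.id ℝ E).prod (fderiv ℝ Hstar R))) R :=
    by have h := HasFDerivAt.prodMk (hasFDerivAt_id R) (hHstar R).hasFDerivAt; exact (hg p).hasFDerivAt.comp R h
  have hzero : (fun R' : E => g (R', Hstar R')) = fun _ => (0 : F) := by
    funext R'
    rw [← hA R' (Hstar R'), hstat R']
  rw [hzero] at hcomp
  have hD0 : ((fderiv ℝ g p).comp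
      ((ContinuousLinearMap.id ℝ E).prod (fderiv ℝ Hstar R))) = 0 :=
    hcomp.unique (hasFDerivAt_const 0 R)
  -- hessH and mixedRH via g
  have hhess_eq : hessH G R (Hstar R) = (fderiv ℝ g p).comp (ContinuousLinearMap.inr ℝ E F) := by
    have : (fun H' => gradH G R H') = fun H' => g (R, H') := by
      funext H'; exact hA R H'
    rw [hessH, this]
    exact ((hg p).hasFDerivAt.comp (Hstar R) (hasFDerivAt_prodMk_right R (Hstar R))).fderiv
  have hmix_eq : mixedRH G R (Hstar R) = (fderiv ℝ g p).comp (ContinuousLinearMap.inl ℝ E F) := by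
    have : (fun R' => gradH G R' (Hstar R)) = fun R' => g (R', Hstar R) := by
      funext R'; exact hA R' (Hstar R)
    rw [mixedRH, this]
    have h := hasFDerivAt_prodMk_left (𝕜 := ℝ) R (Hstar R); exact ((hg p).hasFDerivAt.comp R h).fderiv
  have hL₂ : 0 ≤ L₂ := le_trans (norm_nonneg _) (hmixed_bound R (Hstar R))
  apply ContinuousLinearMap.opNorm_le_bound _ (div_nonneg hL₂ hα.le)
  intro v
  set u := fderiv ℝ Hstar R v with hudef
  -- hess u = - mixed v
  have hkey : hessH G R (Hstar R) u = - mixedRH G R (Hstar R) v := by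
    have h0 : (fderiv ℝ g p) (v, u) = 0 := by
      have := congrArg (fun (T : E →L[ℝ] F) => T v) hD0
      simpa using this
    have hsplit : ((v, u) : E × F) = (v, 0) + (0, u) := by simp
    rw [hhess_eq, hmix_eq]
    simp only [ContinuousLinearMap.comp_apply, ContinuousLinearMap.inr_apply,
      ContinuousLinearMap.inl_apply]
    have := h0
    rw [hsplit, map_add] at this
    exact eq_neg_of_add_eq_zero_right this
  -- the inequality chain
  have h1 : α * ‖u‖ ^ 2 ≤ L₂ * ‖v‖ * ‖u‖ := by
    calc α * ‖u‖ ^ 2 ≤ ⟪hessH G R (Hstar R) u, u⟫ := hhess_pos R (Hstar R) u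
      _ = ⟪-(mixedRH G R (Hstar R) v), u⟫ := by rw [hkey]
      _ ≤ ‖-(mixedRH G R (Hstar R) v)‖ * ‖u‖ := real_inner_le_norm _ _
      _ = ‖mixedRH G R (Hstar R) v‖ * ‖u‖ := by rw [norm_neg]
      _ ≤ (‖mixedRH G R (Hstar R)‖ * ‖v‖) * ‖u‖ := by
          apply mul_le_mul_of_nonneg_right ((mixedRH G R (Hstar R)).le_opNorm v) (norm_nonneg _)
      _ ≤ (L₂ * ‖v‖) * ‖u‖ := by
          apply mul_le_mul_of_nonneg_right
            (mul_le_mul_of_nonneg_right (hmixed_bound R (Hstar R)) (norm_nonneg _)) (norm_nonneg _)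
  show ‖u‖ ≤ L₂ / α * ‖v‖
  rcases eq_or_lt_of_le (norm_nonneg u) with h | h
  · rw [← h]
    positivity
  · rw [div_mul_eq_mul_div, le_div_iff₀ hα]
    nlinarith [h]
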